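/- For all integers n ≥ m ≥ 1 and q ≥ 1, there exists an m-touching subset T of [n]^q of cardinality at most min{ n^q, ⌈2nq·(n/m)^q⌉ }, where T ⊆ [n]^q is m-touching if for all m-element subsets x_1,…,x_q of [n], T intersects x_1 × x_2 × ⋯ × x_q. -/

import Mathlib

open Finset

/-- `T ⊆ [n]^q` is `m`-touching if it meets every product `x_1 × ⋯ × x_q` of
`m`-element subsets of `[n]`. -/
def IsTouching (n q m : ℕ) (T : Finset (Fin q → Fin n)) : Prop :=
  ∀ x : Fin q → Finset (Fin n), (∀ i, (x i).card = m) → ∃ t ∈ T, ∀ i, t i ∈ x i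

/-- The key real inequality behind the union bound. -/
lemma key_ineq (n m q r : ℕ) (hm : 1 ≤ m) (hmn : m ≤ n) (hq : 1 ≤ q)
    (hr : 2 * (n : ℝ) * q * ((n : ℝ) / m) ^ q ≤ (r : ℝ)) :
    (2 : ℝ) ^ (n * q) * ((n : ℝ) ^ q - (m : ℝ) ^ q) ^ r < ((n : ℝ) ^ q) ^ r := by
  have hn : 1 ≤ n := hm.trans hmn
  have hn0 : (0 : ℝ) < n := by exact_mod_cast hn
  have hm0 : (0 : ℝ) < m := by exact_mod_cast hm
  set p : ℝ := ((m : ℝ) / n) ^ q with hp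
  have hp0 : 0 < p := pow_pos (div_pos hm0 hn0) q
  have hp1 : p ≤ 1 := pow_le_one₀ (by positivity) (div_le_one_of_le₀ (by exact_mod_cast hmn) hn0.le)
  have hsplit : (n : ℝ) ^ q - (m : ℝ) ^ q = (n : ℝ) ^ q * (1 - p) := by
    rw [hp, div_pow]
    field_simp
  -- (1-p)^r ≤ exp (-(p*r))
  have h1 : (1 - p) ^ r ≤ Real.exp (-p) ^ r := by
    apply pow_le_pow_left₀ (by linarith)
    linarith [Real.add_one_le_exp (-p)]
  have h2 : Real.exp (-p) ^ r = Real.exp (-(p * r)) := by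
    rw [← Real.exp_nat_mul]; ring_nf
  -- p * r ≥ 2 n q
  have hpr : 2 * (n : ℝ) * q ≤ p * r := by
    have hmul : p * (2 * (n : ℝ) * q * ((n : ℝ) / m) ^ q) = 2 * (n : ℝ) * q := by
      rw [hp, div_pow, div_pow]
      field_simp
    calc 2 * (n : ℝ) * q = p * (2 * (n : ℝ) * q * ((n : ℝ) / m) ^ q) := hmul.symm
      _ ≤ p * r := by exact mul_le_mul_of_nonneg_left hr hp0.le
  have h3 : Real.exp (-(p * r)) ≤ Real.exp (-(2 * (n : ℝ) * q)) :=
    Real.exp_le_exp.2 (by linarith)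
  -- exp (-(2nq)) < (2 ^ (n*q))⁻¹
  have h4 : Real.exp (-(2 * (n : ℝ) * q)) < ((2 : ℝ) ^ (n * q))⁻¹ := by
    rw [Real.exp_neg]
    apply inv_strictAnti₀ (by positivity)
    have : (2 : ℝ) * n * q = ((n * q : ℕ) : ℝ) * 2 := by push_cast; ring
    rw [this, Real.exp_nat_mul]
    apply pow_lt_pow_left₀ _ (by norm_num)
    · have hnq : n * q ≠ 0 := by positivity
      exact hnq
    · linarith [Real.add_one_le_exp (2 : ℝ)]
  have hfin : (2 : ℝ) ^ (n * q) * (1 - p) ^ r < 1 := by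
    have : (1 - p) ^ r < ((2 : ℝ) ^ (n * q))⁻¹ := lt_of_le_of_lt (h1.trans (h2 ▸ h3)) h4
    calc (2 : ℝ) ^ (n * q) * (1 - p) ^ r < (2 : ℝ) ^ (n * q) * ((2 : ℝ) ^ (n * q))⁻¹ :=
          mul_lt_mul_of_pos_left this (by positivity)
      _ = 1 := by field_simp
  calc (2 : ℝ) ^ (n * q) * ((n : ℝ) ^ q - (m : ℝ) ^ q) ^ r
      = ((n : ℝ) ^ q) ^ r * ((2 : ℝ) ^ (n * q) * (1 - p) ^ r) := by
        rw [hsplit, mul_pow]; ring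
    _ < ((n : ℝ) ^ q) ^ r * 1 := by
        apply mul_lt_mul_of_pos_left hfin (by positivity)
    _ = ((n : ℝ) ^ q) ^ r := mul_one _

theorem exists_touching_set (n m q : ℕ) (hm : 1 ≤ m) (hmn : m ≤ n) (hq : 1 ≤ q) :
    ∃ T : Finset (Fin q → Fin n), IsTouching n q m T ∧
      T.card ≤ min (n ^ q) ⌈2 * (n : ℝ) * q * ((n : ℝ) / m) ^ q⌉₊ := by
  set r : ℕ := ⌈2 * (n : ℝ) * q * ((n : ℝ) / m) ^ q⌉₊ with hrdef
  have hn : 1 ≤ n := hm.trans hmn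
  have hrge : 2 * (n : ℝ) * q * ((n : ℝ) / m) ^ q ≤ (r : ℝ) := Nat.le_ceil _
  -- find a good sequence s
  obtain ⟨s, hs⟩ : ∃ s : Fin r → (Fin q → Fin n),
      ∀ x : Fin q → Finset (Fin n), (∀ i, (x i).card = m) → ∃ k, ∀ i, s k i ∈ x i := by
    by_contra hcon
    push_neg at hcon
    set X : Finset (Fin q → Finset (Fin n)) :=
      univ.filter (fun x => ∀ i, (x i).card = m) with hX
    set B : (Fin q → Finset (Fin n)) → Finset (Fin r → Fin q → Fin n) :=
      fun x => univ.filter (fun s => ∀ k, ∃ i, s k i ∉ x i) with hB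
    have hcover : (univ : Finset (Fin r → Fin q → Fin n)) ⊆ X.biUnion B := by
      intro s _
      obtain ⟨x, hx1, hx2⟩ := hcon s
      simp only [hB, hX, mem_biUnion, mem_filter, mem_univ, true_and]
      exact ⟨x, hx1, fun k => hx2 k⟩
    -- card of each bad set
    have hBcard : ∀ x ∈ X, (B x).card = (n ^ q - m ^ q) ^ r := by
      intro x hx
      have hxm : ∀ i, (x i).card = m := (mem_filter.1 hx).2
      have hBeq : B x = Fintype.piFinset (fun _ : Fin r =>
          (univ : Finset (Fin q → Fin n)) \ Fintype.piFinset x) := by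
        ext s
        simp only [hB, mem_filter, mem_univ, true_and, Fintype.mem_piFinset, mem_sdiff,
          not_forall]
      rw [hBeq, Fintype.card_piFinset]
      have hsd : ((univ : Finset (Fin q → Fin n)) \ Fintype.piFinset x).card = n ^ q - m ^ q := by
        rw [card_sdiff_of_subset (subset_univ _), Fintype.card_piFinset]
        congr 1
        · simp [Fintype.card_fun]
        · simp [hxm]
      simp [hsd]
    -- count
    have hXcard : X.card ≤ 2 ^ (n * q) := by
      calc X.card ≤ (univ : Finset (Fin q → Finset (Fin n))).card := card_le_card (filter_subset _ _)
        _ = 2 ^ (n * q) := by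
            rw [card_univ, Fintype.card_fun]
            simp [Fintype.card_finset, ← pow_mul, mul_comm]
    have hcount : n ^ (q * r) ≤ 2 ^ (n * q) * (n ^ q - m ^ q) ^ r := by
      calc n ^ (q * r) = (univ : Finset (Fin r → Fin q → Fin n)).card := by
            rw [card_univ, Fintype.card_fun]
            simp [Fintype.card_fun, ← pow_mul, mul_comm]
        _ ≤ (X.biUnion B).card := card_le_card hcover
        _ ≤ ∑ x ∈ X, (B x).card := card_biUnion_le
        _ = X.card * (n ^ q - m ^ q) ^ r := by
            rw [sum_congr rfl hBcard, sum_const, smul_eq_mul]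
        _ ≤ 2 ^ (n * q) * (n ^ q - m ^ q) ^ r := by
            exact Nat.mul_le_mul_right _ hXcard
    -- contradiction with real inequality
    have hkey := key_ineq n m q r hm hmn hq hrge
    have hcast : ((n : ℝ) ^ q) ^ r ≤ (2 : ℝ) ^ (n * q) * ((n : ℝ) ^ q - (m : ℝ) ^ q) ^ r := by
      have hple : m ^ q ≤ n ^ q := Nat.pow_le_pow_left hmn q
      have := (Nat.cast_le (α := ℝ)).2 hcount
      push_cast [Nat.cast_sub hple] at this
      rw [pow_mul] at this
      exact this
    exact absurd hcast (not_le.2 hkey)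
  refine ⟨image s univ, ?_, ?_⟩
  · intro x hx
    obtain ⟨k, hk⟩ := hs x hx
    exact ⟨s k, mem_image_of_mem s (mem_univ k), hk⟩
  · refine le_min ?_ ?_
    · calc (image s univ).card ≤ (univ : Finset (Fin q → Fin n)).card :=
          card_le_card (subset_univ _)
        _ = n ^ q := by rw [card_univ, Fintype.card_fun]; simp
    · calc (image s univ).card ≤ (univ : Finset (Fin r)).card := card_image_le
        _ = r := by simp
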